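/- Let a, b be integers with b ≤ 3a^2 − 3. Then the polynomial x^3 + 3ax^2 + bx + ab − 2a^3 + 1 is irreducible over ℚ, and it has exactly one real root γ with −a < γ < −a + 1. -/
import Mathlib


open Polynomial

/-- For integers `a, b` with `b ≤ 3a^2 - 3`, the polynomial
`x^3 + 3ax^2 + bx + ab - 2a^3 + 1` is irreducible over `ℚ` and has exactly one real root
`γ` with `-a < γ < -a + 1`. -/
theorem stmt_10 (a b : ℤ) (hb : b ≤ 3 * a ^ 2 - 3) :
    Irreducible (X ^ 3 + C (3 * (a : ℚ)) * X ^ 2 + C (b : ℚ) * X +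
      C ((a : ℚ) * (b : ℚ) - 2 * (a : ℚ) ^ 3 + 1)) ∧
    ∃! γ : ℝ, (-(a : ℝ) < γ ∧ γ < -(a : ℝ) + 1) ∧
      γ ^ 3 + 3 * (a : ℝ) * γ ^ 2 + (b : ℝ) * γ +
        ((a : ℝ) * (b : ℝ) - 2 * (a : ℝ) ^ 3 + 1) = 0 := by
  set n : ℤ := 3 * a ^ 2 - b with hn
  have hn3 : (3 : ℤ) ≤ n := by omega
  constructor
  · -- Irreducibility
    set P : ℚ[X] := X ^ 3 + C (3 * (a : ℚ)) * X ^ 2 + C (b : ℚ) * X +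
      C ((a : ℚ) * (b : ℚ) - 2 * (a : ℚ) ^ 3 + 1) with hP
    have hdeg : P.natDegree = 3 := by
      rw [hP]; compute_degree!
    rw [irreducible_iff_roots_eq_zero_of_degree_le_three (by omega) (by omega)]
    rw [Multiset.eq_zero_iff_forall_notMem]
    intro r hr
    have hP0 : P ≠ 0 := fun h => by simp [h] at hdeg
    rw [mem_roots hP0] at hr
    have heval : r ^ 3 + 3 * (a : ℚ) * r ^ 2 + (b : ℚ) * r +
        ((a : ℚ) * (b : ℚ) - 2 * (a : ℚ) ^ 3 + 1) = 0 := by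
      simpa [hP] using hr
    set s : ℚ := r + (a : ℚ) with hs
    have hseq : s ^ 3 - (n : ℚ) * s + 1 = 0 := by
      rw [hs]; push_cast [hn]; linear_combination heval
    have haeval : aeval s ((X : ℤ[X]) ^ 3 - C n * X + 1) = 0 := by
      simpa using hseq
    have hmon : ((X : ℤ[X]) ^ 3 - C n * X + 1).Monic := by
      monicity!
    obtain ⟨m, hm, hdvd⟩ := exists_integer_of_is_root_of_monic hmon haeval
    have hc0 : ((X : ℤ[X]) ^ 3 - C n * X + 1).coeff 0 = 1 := by
      simp
    rw [hc0] at hdvd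
    have hm1 : m = 1 ∨ m = -1 := Int.isUnit_iff.mp (isUnit_of_dvd_one hdvd)
    have hsm : s = (m : ℚ) := by simpa using hm
    have hmeq : (m : ℚ) ^ 3 - (n : ℚ) * m + 1 = 0 := by rw [← hsm]; exact hseq
    have hmz : m ^ 3 - n * m + 1 = 0 := by exact_mod_cast hmeq
    rcases hm1 with h1 | h1 <;> rw [h1] at hmz <;> norm_num at hmz <;> omega
  · -- Unique real root
    have hN3 : (3 : ℝ) ≤ (n : ℝ) := by exact_mod_cast hn3
    have key : ∀ x : ℝ, x ^ 3 + 3 * (a : ℝ) * x ^ 2 + (b : ℝ) * x +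
        ((a : ℝ) * (b : ℝ) - 2 * (a : ℝ) ^ 3 + 1) =
        (x + a) ^ 3 - (n : ℝ) * (x + a) + 1 := by
      intro x; push_cast [hn]; ring
    set f : ℝ → ℝ := fun t => t ^ 3 - (n : ℝ) * t + 1 with hf
    have hcont : ContinuousOn f (Set.Icc 0 1) := by fun_prop
    have hf0 : f 0 = 1 := by simp [hf]
    have hf1 : f 1 = 2 - (n : ℝ) := by simp [hf]; ring
    have hmem : (0 : ℝ) ∈ Set.Ioo (f 1) (f 0) := by
      rw [hf0, hf1]; constructor <;> [linarith; norm_num]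
    obtain ⟨t, ht, hft⟩ := intermediate_value_Ioo' (by norm_num : (0:ℝ) ≤ 1) hcont hmem
    -- uniqueness of roots of f in (0,1)
    have huniq : ∀ u v : ℝ, u ∈ Set.Ioo (0:ℝ) 1 → v ∈ Set.Ioo (0:ℝ) 1 →
        f u = 0 → f v = 0 → u = v := by
      intro u v hu hv hfu hfv
      have hfac : (u - v) * (u ^ 2 + u * v + v ^ 2 - (n : ℝ)) = 0 := by
        simp only [hf] at hfu hfv
        linear_combination hfu - hfv
      rcases mul_eq_zero.mp hfac with h | h
      · linarith
      · obtain ⟨hu0, hu1⟩ := hu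
        obtain ⟨hv0, hv1⟩ := hv
        nlinarith
    refine ⟨t - a, ⟨⟨by linarith [ht.1], by linarith [ht.2]⟩, ?_⟩, ?_⟩
    · rw [key]; simpa using hft
    · rintro γ ⟨⟨hγ1, hγ2⟩, hγ0⟩
      rw [key] at hγ0
      have := huniq (γ + a) t ⟨by linarith, by linarith⟩ ht hγ0 hft
      linarith
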